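/- arXiv:2505.03851 — 3 statements merged into one kernel-verified Lean document; each statement's English description precedes it below -/
import Mathlib

section
/- Let G be a graph, X a minimum vertex cutset of G, and suppose G − X has components L and R. Let X_L ⊆ X be the set of vertices of X complete to V(L). Then for any subset A ⊆ X_L with |A| ≤ |V(R)|, there is a matching in G saturating A whose other endpoints all lie in V(R). -/
open SimpleGraph

/-- The spanning subgraph of `G` consisting of the bichromatic edges w.r.t. `c`. -/
def bichromSub {V : Type*} (G : SimpleGraph V) (c : V → Bool) : SimpleGraph V where
  Adj u v := G.Adj u v ∧ c u ≠ c v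
  symm := ⟨fun u v h => ⟨h.1.symm, Ne.symm h.2⟩⟩
  loopless := ⟨fun _ h => h.2 rfl⟩

/-- An odd `H`-model in `G`: pairwise disjoint nonempty branch sets, each connected
by bichromatic edges (equivalently, spanned by a tree all of whose edges are
bichromatic), and for every edge of `H` a monochromatic edge of `G` between the
corresponding branch sets. -/
structure IsOddModel {V W : Type*} (G : SimpleGraph V) (H : SimpleGraph W)
    (B : W → Finset V) (c : V → Bool) : Prop where
  nonempty : ∀ w, (B w).Nonempty
  disj : ∀ w w', w ≠ w' → Disjoint (B w) (B w')
  conn : ∀ w, ((bichromSub G c).induce (↑(B w) : Set V)).Connected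
  mono : ∀ w w', H.Adj w w' → ∃ u ∈ B w, ∃ v ∈ B w', G.Adj u v ∧ c u = c v

/-- `G` contains `H` as an odd minor. -/
def HasOddMinor {V W : Type*} (G : SimpleGraph V) (H : SimpleGraph W) : Prop :=
  ∃ B c, IsOddModel G H B c

/-- `G` contains a special odd model of `H`: an odd model in which all
single-vertex branch sets receive the same color. -/
def HasSpecialOddMinor {V W : Type*} (G : SimpleGraph V) (H : SimpleGraph W) : Prop :=
  ∃ B c, IsOddModel G H B c ∧ ∃ b : Bool, ∀ w, (B w).card = 1 → ∀ v ∈ B w, c v = b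

/-- Independence number at most 2. -/
def IndepLEtwo {V : Type*} (G : SimpleGraph V) : Prop :=
  ∀ s : Finset V, (∀ u ∈ s, ∀ v ∈ s, u ≠ v → ¬ G.Adj u v) → s.card ≤ 2

/-- Independence number exactly 2. -/
def IndepEQtwo {V : Type*} (G : SimpleGraph V) : Prop :=
  IndepLEtwo G ∧ ∃ u v : V, u ≠ v ∧ ¬ G.Adj u v

/-- `G` is `k`-connected. -/
def KConnected {V : Type*} [Fintype V] (G : SimpleGraph V) (k : ℕ) : Prop :=
  k < Fintype.card V ∧
    ∀ X : Finset V, X.card < k → (G.induce {v | v ∉ X}).Connected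

/-- `X` is a vertex cutset of `G`. -/
def IsCutset {V : Type*} (G : SimpleGraph V) (X : Finset V) : Prop :=
  ¬ (G.induce {v | v ∉ X}).Preconnected

/-- `X` is a minimum vertex cutset of `G`. -/
def IsMinCutset {V : Type*} (G : SimpleGraph V) (X : Finset V) : Prop :=
  IsCutset G X ∧ ∀ Y : Finset V, IsCutset G Y → X.card ≤ Y.card

/-- `P` is the vertex set of an induced path on 3 vertices in `G`. -/
def IsInducedP3 {V : Type*} [DecidableEq V] (G : SimpleGraph V) (P : Finset V) : Prop :=
  ∃ a b c : V, a ≠ b ∧ b ≠ c ∧ a ≠ c ∧ P = {a, b, c} ∧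
    G.Adj a b ∧ G.Adj b c ∧ ¬ G.Adj a c

/-- `K^a_{a,b}`: the join of a clique on `a` vertices and an independent set of
`b` vertices. -/
def cliqueJoinIndep (a b : ℕ) : SimpleGraph (Fin a ⊕ Fin b) where
  Adj u v := u ≠ v ∧ (u.isLeft ∨ v.isLeft)
  symm := ⟨fun u v h => ⟨h.1.symm, h.2.symm⟩⟩
  loopless := ⟨fun _ h => h.1 rfl⟩

private lemma walk_inv {V' : Type*} {G' : SimpleGraph V'} (P : V' → Prop)
    (h : ∀ u v, G'.Adj u v → P u → P v) {x y : V'} (w : G'.Walk x y) (hx : P x) : P y := by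
  induction w with
  | nil => exact hx
  | cons hadj _ ih => exact ih (h _ _ hadj hx)

/-- If `X` is a minimum cutset of `G` with components `L`, `R` of `G − X`, and
`A` is a subset of the vertices of `X` complete to `L` with `|A| ≤ |R|`, then
`A` can be matched into `R`. -/
theorem stmt3 {V : Type*} [Fintype V] [DecidableEq V] (G : SimpleGraph V)
    (X : Finset V) (hX : IsMinCutset G X) (L R : Finset V)
    (hL : L.Nonempty) (hR : R.Nonempty) (hLR : Disjoint L R)
    (hLX : Disjoint L X) (hRX : Disjoint R X)
    (hcover : L ∪ R ∪ X = Finset.univ)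
    (hsep : ∀ u ∈ L, ∀ v ∈ R, ¬ G.Adj u v)
    (A : Finset V) (hAX : A ⊆ X) (hAL : ∀ a ∈ A, ∀ v ∈ L, G.Adj a v)
    (hcard : A.card ≤ R.card) :
    ∃ f : V → V, Set.InjOn f ↑A ∧ ∀ a ∈ A, f a ∈ R ∧ G.Adj a (f a) := by
  classical
  have hall : ∀ S : Finset V, S ⊆ A →
      S.card ≤ (S.biUnion (fun a => R.filter (fun v => G.Adj a v))).card := by
    intro S hSA
    by_contra hlt
    push_neg at hlt
    set N := S.biUnion (fun a => R.filter (fun v => G.Adj a v)) with hN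
    have hNR : N ⊆ R := by
      intro v hv
      simp only [hN, Finset.mem_biUnion, Finset.mem_filter] at hv
      obtain ⟨a, _, hv, _⟩ := hv
      exact hv
    have hSX : S ⊆ X := hSA.trans hAX
    have hSAcard : S.card ≤ A.card := Finset.card_le_card hSA
    set Y := (X \ S) ∪ N with hY
    have hdisj : Disjoint (X \ S) N :=
      Disjoint.mono Finset.sdiff_subset hNR hRX.symm
    have hYcard : Y.card < X.card := by
      rw [hY, Finset.card_union_of_disjoint hdisj, Finset.card_sdiff_of_subset hSX]
      have := Finset.card_le_card hSX
      omega
    -- pick l and r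
    obtain ⟨l, hl⟩ := hL
    have hrex : ∃ r ∈ R, r ∉ N := by
      by_contra hc
      push_neg at hc
      have : R ⊆ N := hc
      have := Finset.card_le_card this
      omega
    obtain ⟨r, hrR, hrN⟩ := hrex
    have hlY : l ∉ Y := by
      simp only [hY, Finset.mem_union, Finset.mem_sdiff, not_or]
      exact ⟨fun h => Finset.disjoint_left.mp hLX hl h.1,
        fun h => Finset.disjoint_left.mp hLR hl (hNR h)⟩
    have hrY : r ∉ Y := by
      simp only [hY, Finset.mem_union, Finset.mem_sdiff, not_or]
      exact ⟨fun h => Finset.disjoint_left.mp hRX hrR h.1, hrN⟩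
    have hcut : IsCutset G Y := by
      intro hpre
      obtain ⟨w⟩ := hpre ⟨l, hlY⟩ ⟨r, hrY⟩
      have key : ∀ u v : {v : V // v ∈ {v | v ∉ Y}},
          (G.induce {v | v ∉ Y}).Adj u v → (u.1 ∈ L ∪ S) → (v.1 ∈ L ∪ S) := by
        rintro ⟨u, hu⟩ ⟨v, hv⟩ hadj huLS
        simp only [comap_adj, Function.Embedding.coe_subtype] at hadj
        by_contra hvLS
        simp only [Finset.mem_union, not_or] at hvLS
        have hvnotY : v ∉ Y := hv
        simp only [hY, Finset.mem_union, Finset.mem_sdiff, not_or] at hvnotY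
        have hvR : v ∈ R := by
          have : v ∈ L ∪ R ∪ X := hcover ▸ Finset.mem_univ v
          simp only [Finset.mem_union] at this
          rcases this with (h | h) | h
          · exact absurd h hvLS.1
          · exact h
          · exact absurd ⟨h, hvLS.2⟩ hvnotY.1
        rcases Finset.mem_union.mp huLS with huL | huS
        · exact hsep u huL v hvR hadj
        · exact hvnotY.2 (Finset.mem_biUnion.mpr ⟨u, huS,
            Finset.mem_filter.mpr ⟨hvR, hadj⟩⟩)
      have : r ∈ L ∪ S := walk_inv _ key w (Finset.mem_union_left _ hl)
      rcases Finset.mem_union.mp this with h | h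
      · exact Finset.disjoint_left.mp hLR h hrR
      · exact Finset.disjoint_left.mp hRX hrR (hSX h)
    have := hX.2 Y hcut
    omega
  -- apply Hall
  have hall' : ∀ s : Finset ↥A,
      s.card ≤ (s.biUnion (fun a => R.filter (fun v => G.Adj a.1 v))).card := by
    intro s
    have h1 : s.card = (s.image Subtype.val).card :=
      (Finset.card_image_of_injective s Subtype.val_injective).symm
    have h2 : (s.image Subtype.val).biUnion (fun a => R.filter (fun v => G.Adj a v))
        = s.biUnion (fun a => R.filter (fun v => G.Adj a.1 v)) := Finset.image_biUnion
    have h3 : s.image Subtype.val ⊆ A := by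
      intro v hv
      obtain ⟨⟨a, ha⟩, _, rfl⟩ := Finset.mem_image.mp hv
      exact ha
    calc s.card = (s.image Subtype.val).card := h1
      _ ≤ _ := by rw [← h2]; exact hall _ h3
  obtain ⟨f, hfinj, hf⟩ :=
    (Finset.all_card_le_biUnion_card_iff_exists_injective
      (fun a : ↥A => R.filter (fun v => G.Adj a.1 v))).mp hall'
  refine ⟨fun v => if h : v ∈ A then f ⟨v, h⟩ else v, ?_, ?_⟩
  · intro a ha b hb hab
    simp only [Finset.mem_coe] at ha hb
    simp only [dif_pos ha, dif_pos hb] at hab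
    exact congrArg Subtype.val (hfinj hab)
  · intro a ha
    have := hf ⟨a, ha⟩
    simp only [Finset.mem_filter] at this
    simp only [dif_pos ha]
    exact this
end

section
/- Let G be a k-vertex-critical graph with independence number at most 2 whose complement is connected. Then G has at least 2k − 1 vertices. -/
open SimpleGraph

open SimpleGraph Finset

set_option linter.unusedSectionVars false

namespace Stmt10Aux

variable {V : Type*} [Fintype V] [DecidableEq V]

/-- A partial pairing of vertices into nonadjacent pairs (a matching of the complement). -/
def IsPairing (G : SimpleGraph V) (p : V → Option V) : Prop :=
  ∀ ⦃u v⦄, p u = some v → p v = some u ∧ u ≠ v ∧ ¬ G.Adj u v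

/-- Exposed (unmatched) vertices. -/
def expo (p : V → Option V) : Finset V := univ.filter (fun u => p u = none)

lemma mem_expo {p : V → Option V} {u : V} : u ∈ expo p ↔ p u = none := by
  simp [expo]

/-- Matched vertices whose partner is smaller in the canonical order. -/
noncomputable def Bset (p : V → Option V) : Finset V :=
  univ.filter (fun u => ((p u).elim false
    (fun v => decide (Fintype.equivFin V v < Fintype.equivFin V u))) = true)

noncomputable def B'set (p : V → Option V) : Finset V :=
  univ.filter (fun u => ((p u).elim false
    (fun v => decide (Fintype.equivFin V u < Fintype.equivFin V v))) = true)

lemma mem_Bset {p : V → Option V} {u : V} :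
    u ∈ Bset p ↔ ∃ v, p u = some v ∧ Fintype.equivFin V v < Fintype.equivFin V u := by
  cases h : p u <;> simp [Bset, h]

lemma mem_B'set {p : V → Option V} {u : V} :
    u ∈ B'set p ↔ ∃ v, p u = some v ∧ Fintype.equivFin V u < Fintype.equivFin V v := by
  cases h : p u <;> simp [B'set, h]

lemma card_Bset_eq {G : SimpleGraph V} {p : V → Option V} (hp : IsPairing G p) :
    (Bset p).card = (B'set p).card := by
  apply Finset.card_bij (fun u _ => (p u).getD u)
  · intro a ha
    obtain ⟨v, hv, hlt⟩ := mem_Bset.mp ha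
    have := (hp hv).1
    rw [hv]
    exact mem_B'set.mpr ⟨a, this, hlt⟩
  · intro a ha b hb hab
    obtain ⟨va, hva, _⟩ := mem_Bset.mp ha
    obtain ⟨vb, hvb, _⟩ := mem_Bset.mp hb
    rw [hva, hvb] at hab
    simp only [Option.getD_some] at hab
    subst hab
    have h1 := (hp hva).1
    have h2 := (hp hvb).1
    rw [h1] at h2
    exact Option.some.inj h2
  · intro b hb
    obtain ⟨v, hv, hlt⟩ := mem_B'set.mp hb
    refine ⟨v, ?_, ?_⟩
    · have := (hp hv).1
      exact mem_Bset.mpr ⟨b, this, hlt⟩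
    · rw [(hp hv).1]; simp

lemma expo_card_eq {G : SimpleGraph V} {p : V → Option V} (hp : IsPairing G p) :
    (expo p).card + 2 * (Bset p).card = Fintype.card V := by
  have hU : expo p ∪ (Bset p ∪ B'set p) = univ := by
    ext u
    simp only [mem_union, mem_expo, mem_Bset, mem_B'set, mem_univ, iff_true]
    cases h : p u with
    | none => exact Or.inl rfl
    | some v =>
      right
      have hne : u ≠ v := (hp h).2.1
      have : Fintype.equivFin V v ≠ Fintype.equivFin V u := by
        intro hh; exact hne ((Fintype.equivFin V).injective hh).symm
      rcases lt_or_gt_of_ne this with hlt | hgt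
      · exact Or.inl ⟨v, rfl, hlt⟩
      · exact Or.inr ⟨v, rfl, hgt⟩
  have hd1 : Disjoint (Bset p) (B'set p) := by
    rw [Finset.disjoint_left]
    intro a ha ha'
    obtain ⟨v, hv, h1⟩ := mem_Bset.mp ha
    obtain ⟨v', hv', h2⟩ := mem_B'set.mp ha'
    rw [hv] at hv'
    cases Option.some.inj hv'
    exact absurd h1 (not_lt.mpr h2.le)
  have hd2 : Disjoint (expo p) (Bset p ∪ B'set p) := by
    rw [Finset.disjoint_left]
    intro a ha ha'
    rw [mem_expo] at ha
    rcases mem_union.mp ha' with h | h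
    · obtain ⟨v, hv, _⟩ := mem_Bset.mp h; rw [ha] at hv; cases hv
    · obtain ⟨v, hv, _⟩ := mem_B'set.mp h; rw [ha] at hv; cases hv
  have := congrArg Finset.card hU
  rw [card_union_of_disjoint hd2, card_union_of_disjoint hd1] at this
  have he := card_Bset_eq hp
  rw [Finset.card_univ] at this
  omega

/-- Representative map: each matched pair is collapsed to its smaller element. -/
noncomputable def repFun (p : V → Option V) : V → V := fun u =>
  match p u with
  | none => u
  | some v => if Fintype.equivFin V v < Fintype.equivFin V u then v else u

lemma repFun_none {p : V → Option V} {u : V} (h : p u = none) : repFun p u = u := by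
  unfold repFun; rw [h]

lemma repFun_some_lt {p : V → Option V} {u v : V} (h : p u = some v)
    (hlt : Fintype.equivFin V v < Fintype.equivFin V u) : repFun p u = v := by
  unfold repFun; rw [h]; exact if_pos hlt

lemma repFun_some_ge {p : V → Option V} {u v : V} (h : p u = some v)
    (hlt : ¬ Fintype.equivFin V v < Fintype.equivFin V u) : repFun p u = u := by
  unfold repFun; rw [h]; exact if_neg hlt

lemma repFun_not_mem_Bset {G : SimpleGraph V} {p : V → Option V} (hp : IsPairing G p) (u : V) :
    repFun p u ∉ Bset p := by
  intro hmem
  obtain ⟨y, hy, hlt⟩ := mem_Bset.mp hmem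
  cases h : p u with
  | none =>
    rw [repFun_none h] at hy
    rw [h] at hy
    cases hy
  | some v =>
    by_cases hc : Fintype.equivFin V v < Fintype.equivFin V u
    · rw [repFun_some_lt h hc] at hy hlt
      rw [(hp h).1] at hy
      cases Option.some.inj hy
      exact absurd hlt (not_lt.mpr hc.le)
    · rw [repFun_some_ge h hc] at hy hlt
      rw [h] at hy
      cases Option.some.inj hy
      exact hc hlt

lemma repFun_valid {G : SimpleGraph V} {p : V → Option V} (hp : IsPairing G p)
    {a b : V} (hab : G.Adj a b) : repFun p a ≠ repFun p b := by
  intro h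
  have hne : a ≠ b := hab.ne
  cases ha : p a with
  | none =>
    rw [repFun_none ha] at h
    cases hb : p b with
    | none => rw [repFun_none hb] at h; exact hne h
    | some c' =>
      by_cases hc : Fintype.equivFin V c' < Fintype.equivFin V b
      · rw [repFun_some_lt hb hc] at h
        subst h
        exact (hp hb).2.2 hab.symm
      · rw [repFun_some_ge hb hc] at h; exact hne h
  | some c =>
    cases hb : p b with
    | none =>
      rw [repFun_none hb] at h
      by_cases hc : Fintype.equivFin V c < Fintype.equivFin V a
      · rw [repFun_some_lt ha hc] at h
        subst h
        exact (hp ha).2.2 hab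
      · rw [repFun_some_ge ha hc] at h; exact hne h
    | some c' =>
      by_cases h1 : Fintype.equivFin V c < Fintype.equivFin V a <;>
        by_cases h2 : Fintype.equivFin V c' < Fintype.equivFin V b
      · rw [repFun_some_lt ha h1, repFun_some_lt hb h2] at h
        subst h
        have e1 := (hp ha).1
        have e2 := (hp hb).1
        rw [e1] at e2
        exact hne (Option.some.inj e2)
      · rw [repFun_some_lt ha h1, repFun_some_ge hb h2] at h
        subst h
        exact (hp ha).2.2 hab
      · rw [repFun_some_ge ha h1, repFun_some_lt hb h2] at h
        subst h
        exact (hp hb).2.2 hab.symm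
      · rw [repFun_some_ge ha h1, repFun_some_ge hb h2] at h; exact hne h

lemma pairing_colorable {G : SimpleGraph V} {p : V → Option V} (hp : IsPairing G p) :
    G.Colorable ((univ \ Bset p).card) := by
  have hmem : ∀ u, repFun p u ∈ univ \ Bset p := fun u =>
    mem_sdiff.mpr ⟨mem_univ _, repFun_not_mem_Bset hp u⟩
  have C : G.Coloring {x // x ∈ univ \ Bset p} :=
    SimpleGraph.Coloring.mk (fun u => ⟨repFun p u, hmem u⟩)
      (fun hab h => repFun_valid hp hab (congrArg Subtype.val h))
  have := C.colorable
  rwa [Fintype.card_coe] at this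

/-- Augment a pairing along a nonadjacent exposed pair. -/
lemma augment {G : SimpleGraph V} {p : V → Option V} (hp : IsPairing G p) {u v : V}
    (hne : u ≠ v) (hna : ¬ G.Adj u v) (hu : p u = none) (hv : p v = none) :
    ∃ q, IsPairing G q ∧ (expo q).card + 2 = (expo p).card := by
  classical
  set q : V → Option V := fun x => if x = u then some v else if x = v then some u else p x
    with hq
  have hqu : q u = some v := by simp [hq]
  have hqv : q v = some u := by simp [hq, Ne.symm hne]
  have hqo : ∀ x, x ≠ u → x ≠ v → q x = p x := by
    intro x h1 h2; simp [hq, h1, h2]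
  refine ⟨q, ?_, ?_⟩
  · intro a b hab
    by_cases hau : a = u
    · subst hau
      rw [hqu] at hab
      cases Option.some.inj hab
      exact ⟨hqv, hne, hna⟩
    · by_cases hav : a = v
      · subst hav
        rw [hqv] at hab
        cases Option.some.inj hab
        exact ⟨hqu, Ne.symm hne, fun h => hna h.symm⟩
      · rw [hqo a hau hav] at hab
        have hs := hp hab
        have hbu : b ≠ u := by rintro rfl; rw [hs.1] at hu; cases hu
        have hbv : b ≠ v := by rintro rfl; rw [hs.1] at hv; cases hv
        exact ⟨by rw [hqo b hbu hbv]; exact hs.1, hs.2⟩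
  · have hset : expo q = expo p \ {u, v} := by
      ext x
      simp only [mem_expo, mem_sdiff, mem_insert, mem_singleton]
      by_cases hxu : x = u
      · subst hxu; simp [hqu]
      · by_cases hxv : x = v
        · subst hxv; simp [hqv]
        · simp [hqo x hxu hxv, hxu, hxv]
    rw [hset]
    have hsub : ({u, v} : Finset V) ⊆ expo p := by
      intro x hx
      rcases mem_insert.mp hx with rfl | hx
      · exact mem_expo.mpr hu
      · rw [mem_singleton] at hx; subst hx; exact mem_expo.mpr hv
    have := Finset.card_sdiff_add_card_eq_card hsub
    rw [Finset.card_insert_of_notMem (by simpa using hne), Finset.card_singleton] at this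
    omega

/-- Flipping a pairing to another one on a set closed under both pairings. -/
lemma flip {G : SimpleGraph V} {M N : V → Option V} (hM : IsPairing G M) (hN : IsPairing G N)
    {S : Finset V} (hSM : ∀ x ∈ S, ∀ y, M x = some y → y ∈ S)
    (hSN : ∀ x ∈ S, ∀ y, N x = some y → y ∈ S) :
    IsPairing G (fun x => if x ∈ S then N x else M x) ∧
    expo (fun x => if x ∈ S then N x else M x) = (expo M \ S) ∪ (expo N ∩ S) := by
  constructor
  · intro a b hab
    dsimp only at hab
    by_cases haS : a ∈ S
    · rw [if_pos haS] at hab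
      have hbS : b ∈ S := hSN a haS b hab
      refine ⟨?_, (hN hab).2⟩
      dsimp only
      rw [if_pos hbS]; exact (hN hab).1
    · rw [if_neg haS] at hab
      have hbS : b ∉ S := by
        intro hbS
        exact haS (hSM b hbS a (hM hab).1)
      refine ⟨?_, (hM hab).2⟩
      dsimp only
      rw [if_neg hbS]; exact (hM hab).1
  · ext x
    simp only [mem_expo, mem_union, mem_sdiff, mem_inter]
    by_cases hxS : x ∈ S
    · simp [hxS, mem_expo]
    · simp [hxS, mem_expo]

/-- The alternating walk from `u`, alternately following `N` and `M`. -/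
def wk (M N : V → Option V) (u : V) : ℕ → Option V
  | 0 => some u
  | (i+1) => (wk M N u i).bind (fun x => if i % 2 = 0 then N x else M x)

variable {G : SimpleGraph V} {M N : V → Option V} {u : V}

lemma wk_succ_some {i : ℕ} {a : V} (h : wk M N u (i + 1) = some a) :
    ∃ b, wk M N u i = some b ∧ (if i % 2 = 0 then N b else M b) = some a := by
  rw [wk] at h
  rcases hb : wk M N u i with _ | b
  · rw [hb] at h; cases h
  · rw [hb] at h; exact ⟨b, rfl, h⟩

lemma wk_none_mono {i j : ℕ} (hij : i ≤ j) (h : wk M N u i = none) :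
    wk M N u j = none := by
  induction j with
  | zero => exact (Nat.le_zero.mp hij) ▸ h
  | succ j IH =>
    rcases Nat.lt_or_ge i (j+1) with hlt | hge
    · have := IH (by omega)
      rw [wk, this]; rfl
    · have : i = j + 1 := by omega
      exact this ▸ h

lemma wk_some_of_le {i j : ℕ} {a : V} (hij : i ≤ j) (h : wk M N u j = some a) :
    ∃ b, wk M N u i = some b := by
  rcases hb : wk M N u i with _ | b
  · rw [wk_none_mono hij hb] at h; cases h
  · exact ⟨b, rfl⟩

lemma step_symm (hM : IsPairing G M) (hN : IsPairing G N) {i : ℕ} {a b : V}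
    (h : (if i % 2 = 0 then N a else M a) = some b) :
    (if i % 2 = 0 then N b else M b) = some a := by
  by_cases hp : i % 2 = 0
  · rw [if_pos hp] at h ⊢; exact (hN h).1
  · rw [if_neg hp] at h ⊢; exact (hM h).1

lemma step_ne (hM : IsPairing G M) (hN : IsPairing G N) {i : ℕ} {a b : V}
    (h : (if i % 2 = 0 then N a else M a) = some b) : a ≠ b := by
  by_cases hp : i % 2 = 0
  · rw [if_pos hp] at h; exact (hN h).2.1
  · rw [if_neg hp] at h; exact (hM h).2.1

lemma wk_one : wk M N u 1 = N u := by
  rw [wk]; show (some u).bind _ = N u; simp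

lemma wk_inj (hM : IsPairing G M) (hN : IsPairing G N) (hMu : M u = none) :
    ∀ l j a, j < l → wk M N u j = some a → wk M N u l = some a → False := by
  intro l
  induction l using Nat.strong_induction_on with
  | _ l IH =>
    intro j a hjl hja hla
    match l, hjl with
    | (l' + 1), hjl =>
      obtain ⟨b, hb, hstep⟩ := wk_succ_some hla
      have hsym : (if l' % 2 = 0 then N a else M a) = some b := step_symm hM hN hstep
      match j with
      | 0 =>
        have hau : u = a := Option.some.inj hja
        subst hau
        by_cases hpar : l' % 2 = 0
        · rw [if_pos hpar] at hsym
          have hwk1 : wk M N u 1 = some b := by rw [wk_one, hsym]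
          rcases (by omega : l' = 0 ∨ l' = 1 ∨ 2 ≤ l') with h0 | h1 | h2
          · subst h0
            have hbu : u = b := Option.some.inj hb
            subst hbu
            exact (hN hsym).2.1 rfl
          · subst h1; simp at hpar
          · exact IH l' (by omega) 1 b (by omega) hwk1 hb
        · rw [if_neg hpar] at hsym
          rw [hMu] at hsym
          cases hsym
      | (j' + 1) =>
        obtain ⟨c, hc, hstepc⟩ := wk_succ_some hja
        have hsymc : (if j' % 2 = 0 then N a else M a) = some c := step_symm hM hN hstepc
        obtain ⟨d0, hd0⟩ := wk_some_of_le (by omega : j' + 1 + 1 ≤ l' + 1) hla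
        obtain ⟨b', hb', hstep'⟩ := wk_succ_some hd0
        rw [hja] at hb'
        cases Option.some.inj hb'
        rcases (by omega : l' % 2 = j' % 2 ∨ l' % 2 = (j' + 1) % 2) with hpp | hpp
        · have hbc : b = c := by
            by_cases hj : j' % 2 = 0
            · rw [if_pos (hpp ▸ hj : l' % 2 = 0)] at hsym
              rw [if_pos hj] at hsymc
              rw [hsym] at hsymc
              exact Option.some.inj hsymc
            · rw [if_neg (fun hh => hj (by omega) : ¬ l' % 2 = 0)] at hsym
              rw [if_neg hj] at hsymc
              rw [hsym] at hsymc
              exact Option.some.inj hsymc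
          subst hbc
          exact IH l' (by omega) j' b (by omega) hc hb
        · have hbd : b = d0 := by
            by_cases hj : (j' + 1) % 2 = 0
            · rw [if_pos (hpp ▸ hj : l' % 2 = 0)] at hsym
              rw [if_pos hj] at hstep'
              rw [hsym] at hstep'
              exact Option.some.inj hstep'
            · rw [if_neg (fun hh => hj (by omega) : ¬ l' % 2 = 0)] at hsym
              rw [if_neg hj] at hstep'
              rw [hsym] at hstep'
              exact Option.some.inj hstep'
          subst hbd
          rcases lt_trichotomy (j' + 2) l' with hlt | heq | hgt
          · exact IH l' (by omega) (j' + 2) b hlt hd0 hb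
          · omega
          · have hjj : j' + 1 = l' := by omega
            subst hjj
            rw [hja] at hb
            cases Option.some.inj hb
            exact step_ne hM hN hsym rfl

lemma walk_struct (hM : IsPairing G M) (hN : IsPairing G N) (hMu : M u = none)
    (hNu : N u ≠ none) :
    ∃ S : Finset V, (∀ x ∈ S, ∀ y, M x = some y → y ∈ S) ∧
      (∀ x ∈ S, ∀ y, N x = some y → y ∈ S) ∧ u ∈ S ∧
      ∃ z, z ∈ S ∧ z ≠ u ∧
        ((expo M ∩ S = {u, z} ∧ expo N ∩ S = ∅) ∨
         (expo M ∩ S = {u} ∧ expo N ∩ S = {z} ∧ N z = none)) := by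
  classical
  have hex : ∃ i, wk M N u (i+1) = none := by
    by_contra hco
    push_neg at hco
    have hsome : ∀ i, ∃ a, wk M N u i = some a := by
      intro i
      match i with
      | 0 => exact ⟨u, rfl⟩
      | (i+1) =>
        rcases h : wk M N u (i+1) with _ | a
        · exact absurd h (hco i)
        · exact ⟨a, rfl⟩
    choose f hf using hsome
    have hinj : Function.Injective (fun i : Fin (Fintype.card V + 1) => f i.val) := by
      intro i j hij
      by_contra hne
      have hne' : i.val ≠ j.val := fun h => hne (Fin.ext h)
      rcases lt_or_gt_of_ne hne' with h | h
      · refine wk_inj hM hN hMu j.val i.val (f i.val) h (hf i.val) ?_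
        rw [show f i.val = f j.val from hij]
        exact hf j.val
      · refine wk_inj hM hN hMu i.val j.val (f j.val) h (hf j.val) ?_
        rw [show f j.val = f i.val from hij.symm]
        exact hf i.val
    have := Fintype.card_le_of_injective _ hinj
    simp [Fintype.card_fin] at this
  set t := Nat.find hex with htdef
  have ht1 : wk M N u (t+1) = none := Nat.find_spec hex
  have htmin : ∀ i, i < t → wk M N u (i+1) ≠ none := fun i hi => Nat.find_min hex hi
  have hsome : ∀ i, i ≤ t → wk M N u i ≠ none := by
    intro i hi
    match i with
    | 0 => intro h; simp [wk] at h
    | (i+1) => exact htmin i (by omega)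
  have ht0 : t ≠ 0 := by
    intro h
    rw [h, wk_one] at ht1
    exact hNu ht1
  have hfs : ∀ i, i ≤ t → wk M N u i = some ((wk M N u i).getD u) := by
    intro i hi
    rcases h : wk M N u i with _ | a
    · exact absurd h (hsome i hi)
    · rfl
  set S : Finset V := (Finset.range (t+1)).image (fun i => (wk M N u i).getD u) with hSdef
  have mem_S : ∀ x, x ∈ S ↔ ∃ i, i ≤ t ∧ wk M N u i = some x := by
    intro x
    constructor
    · intro hx
      obtain ⟨i, hi, hix⟩ := Finset.mem_image.mp hx
      rw [Finset.mem_range] at hi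
      exact ⟨i, by omega, by rw [← hix]; exact hfs i (by omega)⟩
    · rintro ⟨i, hit, hx⟩
      exact Finset.mem_image.mpr ⟨i, Finset.mem_range.mpr (by omega), by rw [hx]; rfl⟩
  have huS : u ∈ S := (mem_S u).mpr ⟨0, by omega, rfl⟩
  set z : V := (wk M N u t).getD u with hzdef
  have hz : wk M N u t = some z := hfs t le_rfl
  have hzS : z ∈ S := (mem_S z).mpr ⟨t, le_rfl, hz⟩
  have hzu : z ≠ u := by
    intro h
    exact wk_inj hM hN hMu t 0 u (by omega) rfl (h ▸ hz)
  -- closure under M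
  have hSM : ∀ x ∈ S, ∀ y, M x = some y → y ∈ S := by
    intro x hx y hMxy
    obtain ⟨i, hit, hwi⟩ := (mem_S x).mp hx
    by_cases hpar : i % 2 = 0
    · match i, hpar with
      | 0, _ =>
        have : u = x := Option.some.inj hwi
        subst this
        rw [hMu] at hMxy
        cases hMxy
      | (i'+1), hpar =>
        obtain ⟨c, hc, hstep⟩ := wk_succ_some hwi
        rw [if_neg (by omega : ¬ i' % 2 = 0)] at hstep
        have := (hM hstep).1
        rw [this] at hMxy
        cases Option.some.inj hMxy
        exact (mem_S _).mpr ⟨i', by omega, hc⟩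
    · rcases (by omega : i < t ∨ i = t) with hlt | heq
      · refine (mem_S y).mpr ⟨i+1, by omega, ?_⟩
        rw [wk, hwi]
        show (if i % 2 = 0 then N x else M x) = some y
        rw [if_neg hpar]
        exact hMxy
      · subst heq
        exfalso
        rw [wk, hwi] at ht1
        have : (if t % 2 = 0 then N x else M x) = none := ht1
        rw [if_neg hpar, hMxy] at this
        cases this
  -- closure under N
  have hSN : ∀ x ∈ S, ∀ y, N x = some y → y ∈ S := by
    intro x hx y hNxy
    obtain ⟨i, hit, hwi⟩ := (mem_S x).mp hx
    by_cases hpar : i % 2 = 0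
    · rcases (by omega : i < t ∨ i = t) with hlt | heq
      · refine (mem_S y).mpr ⟨i+1, by omega, ?_⟩
        rw [wk, hwi]
        show (if i % 2 = 0 then N x else M x) = some y
        rw [if_pos hpar]
        exact hNxy
      · subst heq
        exfalso
        rw [wk, hwi] at ht1
        have : (if t % 2 = 0 then N x else M x) = none := ht1
        rw [if_pos hpar, hNxy] at this
        cases this
    · match i, hpar with
      | (i'+1), hpar =>
        obtain ⟨c, hc, hstep⟩ := wk_succ_some hwi
        rw [if_pos (by omega : i' % 2 = 0)] at hstep
        have := (hN hstep).1
        rw [this] at hNxy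
        cases Option.some.inj hNxy
        exact (mem_S _).mpr ⟨i', by omega, hc⟩
  -- characterization of M-exposed vertices in S
  have hMS : ∀ x, x ∈ S → M x = none → x = u ∨ (x = z ∧ t % 2 = 1) := by
    intro x hx hMx
    obtain ⟨i, hit, hwi⟩ := (mem_S x).mp hx
    by_cases hpar : i % 2 = 0
    · match i, hpar with
      | 0, _ => exact Or.inl (Option.some.inj hwi).symm
      | (i'+1), hpar =>
        exfalso
        obtain ⟨c, hc, hstep⟩ := wk_succ_some hwi
        rw [if_neg (by omega : ¬ i' % 2 = 0)] at hstep
        have := (hM hstep).1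
        rw [hMx] at this
        cases this
    · rcases (by omega : i < t ∨ i = t) with hlt | heq
      · exfalso
        apply htmin i hlt
        rw [wk, hwi]
        show (if i % 2 = 0 then N x else M x) = none
        rw [if_neg hpar, hMx]
      · subst heq
        rw [hz] at hwi
        exact Or.inr ⟨(Option.some.inj hwi).symm, by omega⟩
  -- characterization of N-exposed vertices in S
  have hNS : ∀ x, x ∈ S → N x = none → x = z ∧ t % 2 = 0 := by
    intro x hx hNx
    obtain ⟨i, hit, hwi⟩ := (mem_S x).mp hx
    by_cases hpar : i % 2 = 0
    · rcases (by omega : i < t ∨ i = t) with hlt | heq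
      · exfalso
        match i, hpar with
        | 0, _ =>
          have : u = x := Option.some.inj hwi
          subst this
          exact hNu hNx
        | (i'+1), hpar =>
          apply htmin (i'+1) hlt
          rw [wk, hwi]
          show (if (i'+1) % 2 = 0 then N x else M x) = none
          rw [if_pos hpar, hNx]
      · subst heq
        rw [hz] at hwi
        exact ⟨(Option.some.inj hwi).symm, hpar⟩
    · exfalso
      match i, hpar with
      | (i'+1), hpar =>
        obtain ⟨c, hc, hstep⟩ := wk_succ_some hwi
        rw [if_pos (by omega : i' % 2 = 0)] at hstep
        have := (hN hstep).1
        rw [hNx] at this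
        cases this
  have hzend : (if t % 2 = 0 then N z else M z) = none := by
    have := ht1
    rw [wk, hz] at this
    exact this
  refine ⟨S, hSM, hSN, huS, z, hzS, hzu, ?_⟩
  by_cases hpt : t % 2 = 0
  · right
    rw [if_pos hpt] at hzend
    refine ⟨?_, ?_, hzend⟩
    · ext x
      simp only [mem_inter, mem_expo, mem_singleton]
      constructor
      · rintro ⟨hx1, hx2⟩
        rcases hMS x hx2 hx1 with h | ⟨_, h⟩
        · exact h
        · omega
      · rintro rfl
        exact ⟨hMu, huS⟩
    · ext x
      simp only [mem_inter, mem_expo, mem_singleton]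
      constructor
      · rintro ⟨hx1, hx2⟩
        exact (hNS x hx2 hx1).1
      · rintro rfl
        exact ⟨hzend, hzS⟩
  · left
    rw [if_neg hpt] at hzend
    constructor
    · ext x
      simp only [mem_inter, mem_expo, mem_insert, mem_singleton]
      constructor
      · rintro ⟨hx1, hx2⟩
        rcases hMS x hx2 hx1 with h | ⟨h, _⟩
        · exact Or.inl h
        · exact Or.inr h
      · rintro (rfl | rfl)
        · exact ⟨hMu, huS⟩
        · exact ⟨hzend, hzS⟩
    · ext x
      simp only [mem_inter, mem_expo, Finset.notMem_empty, iff_false]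
      rintro ⟨hx1, hx2⟩
      have := (hNS x hx2 hx1).2
      omega

lemma exists_avoiding {G : SimpleGraph V}
    (hα : ∀ s : Finset V, (∀ u ∈ s, ∀ v ∈ s, u ≠ v → ¬ G.Adj u v) → s.card ≤ 2)
    {m : ℕ} (w : V) (hcol : (G.induce {u | u ≠ w}).Colorable m) :
    ∃ p, IsPairing G p ∧ p w = none ∧ Fintype.card V ≤ (m + 1) + (Bset p).card := by
  classical
  obtain ⟨C⟩ := hcol
  have hnon : ∀ (u v : V) (hu : u ≠ w) (hv : v ≠ w), u ≠ v →
      C ⟨u, hu⟩ = C ⟨v, hv⟩ → ¬ G.Adj u v := by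
    intro u v hu hv huv hc hadj
    have hadj' : (G.induce {u | u ≠ w}).Adj ⟨u, hu⟩ ⟨v, hv⟩ := by
      simp only [comap_adj, Function.Embedding.coe_subtype]
      exact hadj
    exact C.valid hadj' hc
  set PS : V → Finset V := fun u => univ.filter
    (fun v => ∃ (hu : u ≠ w) (hv : v ≠ w), u ≠ v ∧ C ⟨u, hu⟩ = C ⟨v, hv⟩) with hPS
  have mem_PS : ∀ u v, v ∈ PS u ↔
      ∃ (hu : u ≠ w) (hv : v ≠ w), u ≠ v ∧ C ⟨u, hu⟩ = C ⟨v, hv⟩ := by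
    intro u v
    rw [hPS]
    simp
  have huniq : ∀ u v v', v ∈ PS u → v' ∈ PS u → v = v' := by
    intro u v v' hv hv'
    by_contra hne
    obtain ⟨hu, hvw, huv, hc⟩ := (mem_PS u v).mp hv
    obtain ⟨_, hvw', huv', hc'⟩ := (mem_PS u v').mp hv'
    have hcard : ({u, v, v'} : Finset V).card = 3 := by
      rw [Finset.card_insert_of_notMem (by simp [huv, huv']),
        Finset.card_insert_of_notMem (by simp [hne]), Finset.card_singleton]
    have hind : ∀ x ∈ ({u, v, v'} : Finset V), ∀ y ∈ ({u, v, v'} : Finset V),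
        x ≠ y → ¬ G.Adj x y := by
      have nuv : ¬ G.Adj u v := hnon u v hu hvw huv hc
      have nuv' : ¬ G.Adj u v' := hnon u v' hu hvw' huv' hc'
      have nvv' : ¬ G.Adj v v' := hnon v v' hvw hvw' hne (hc.symm.trans hc')
      intro x hx y hy hxy
      simp only [Finset.mem_insert, Finset.mem_singleton] at hx hy
      rcases hx with rfl | rfl | rfl <;> rcases hy with rfl | rfl | rfl <;>
        first
          | exact absurd rfl hxy
          | exact nuv
          | exact nuv'
          | exact nvv'
          | exact fun hh => nuv hh.symm
          | exact fun hh => nuv' hh.symm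
          | exact fun hh => nvv' hh.symm
    have := hα _ hind
    omega
  have psym : ∀ u v, v ∈ PS u → u ∈ PS v := by
    intro u v hv
    obtain ⟨hu, hvw, huv, hc⟩ := (mem_PS u v).mp hv
    exact (mem_PS v u).mpr ⟨hvw, hu, huv.symm, hc.symm⟩
  set p : V → Option V := fun u => if h : (PS u).Nonempty then some h.choose else none
    with hpdef
  have hpspec : ∀ u v, p u = some v → v ∈ PS u := by
    intro u v h
    rw [hpdef] at h
    dsimp only at h
    split at h
    · rename_i hne
      cases Option.some.inj h
      exact hne.choose_spec
    · cases h
  have hpfull : ∀ u v, v ∈ PS u → p u = some v := by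
    intro u v hv
    have hne : (PS u).Nonempty := ⟨v, hv⟩
    rw [hpdef]
    dsimp only
    rw [dif_pos hne]
    exact congrArg some (huniq u _ v hne.choose_spec hv)
  have hpair : IsPairing G p := by
    intro u v h
    have hv := hpspec u v h
    obtain ⟨hu, hvw, huv, hc⟩ := (mem_PS u v).mp hv
    exact ⟨hpfull v u (psym u v hv), huv, hnon u v hu hvw huv hc⟩
  have hpw : p w = none := by
    rw [hpdef]
    dsimp only
    rw [dif_neg]
    rintro ⟨x, hx⟩
    obtain ⟨hww, -⟩ := (mem_PS w x).mp hx
    exact hww rfl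
  refine ⟨p, hpair, hpw, ?_⟩
  set ψ : V → Option (Fin m) := fun x => if h : x ≠ w then some (C ⟨x, h⟩) else none
    with hψ
  have hinj : Set.InjOn ψ (univ \ Bset p : Finset V) := by
    intro x hx y hy heq
    by_contra hne
    by_cases hxw : x = w <;> by_cases hyw : y = w
    · exact hne (hxw.trans hyw.symm)
    · rw [hψ] at heq
      simp only [dif_neg (fun hh => hh hxw : ¬ x ≠ w), dif_pos hyw] at heq
      cases heq
    · rw [hψ] at heq
      simp only [dif_pos hxw, dif_neg (fun hh => hh hyw : ¬ y ≠ w)] at heq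
      cases heq
    · rw [hψ] at heq
      simp only [dif_pos hxw, dif_pos hyw] at heq
      have hceq : C ⟨x, hxw⟩ = C ⟨y, hyw⟩ := Option.some.inj heq
      have hyPS : y ∈ PS x := (mem_PS x y).mpr ⟨hxw, hyw, hne, hceq⟩
      have hpx : p x = some y := hpfull x y hyPS
      have hpy : p y = some x := hpfull y x (psym x y hyPS)
      rw [Finset.coe_sdiff, Set.mem_diff] at hx hy
      have hxB : ¬ (Fintype.equivFin V y < Fintype.equivFin V x) := by
        intro hlt
        exact hx.2 (by exact_mod_cast mem_Bset.mpr ⟨y, hpx, hlt⟩)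
      have hyB : ¬ (Fintype.equivFin V x < Fintype.equivFin V y) := by
        intro hlt
        exact hy.2 (by exact_mod_cast mem_Bset.mpr ⟨x, hpy, hlt⟩)
      have : Fintype.equivFin V x ≠ Fintype.equivFin V y :=
        fun hh => hne ((Fintype.equivFin V).injective hh)
      rcases lt_or_gt_of_ne this with h | h
      · exact hyB h
      · exact hxB h
  have hcard := Finset.card_le_card_of_injOn ψ
    (fun a _ => Finset.mem_univ (ψ a)) hinj
  rw [Finset.card_univ, Fintype.card_option, Fintype.card_fin] at hcard
  have hsplit : (univ \ Bset p).card + (Bset p).card = Fintype.card V := by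
    rw [Finset.card_sdiff_add_card_eq_card (Finset.subset_univ _), Finset.card_univ]
  omega

end Stmt10Aux

open Stmt10Aux

/-- A `k`-vertex-critical graph with independence number at most 2 whose
complement is connected has at least `2k − 1` vertices. -/
theorem stmt10 {V : Type*} [Fintype V] (G : SimpleGraph V)
    (hα : IndepLEtwo G) (k : ℕ) (hk : G.chromaticNumber = k)
    (hcrit : ∀ v : V, (G.induce {u | u ≠ v}).chromaticNumber = (k - 1 : ℕ))
    (hanti : Gᶜ.Connected) :
    2 * k - 1 ≤ Fintype.card V := by
  classical
  set n := Fintype.card V with hn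
  have hkn : k ≤ n := by
    have := (colorable_of_fintype G).chromaticNumber_le
    rw [hk] at this
    exact_mod_cast this
  rcases Nat.lt_or_ge k 2 with hk2 | hk2
  · -- trivial small cases
    by_cases hn0 : n = 0
    · have hemp : IsEmpty V := Fintype.card_eq_zero_iff.mp hn0
      have h0 := G.chromaticNumber_eq_zero_of_isEmpty
      rw [hk] at h0
      have : k = 0 := by exact_mod_cast h0
      omega
    · omega
  · by_contra hcon
    push_neg at hcon
    have hcon' : n ≤ 2 * k - 2 := by omega
    have hnotcol : ¬ G.Colorable (k - 1) := by
      intro hc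
      have := hc.chromaticNumber_le
      rw [hk] at this
      have : k ≤ k - 1 := by exact_mod_cast this
      omega
    -- every pairing satisfies 2k ≤ n + #exposed
    have C1e : ∀ p : V → Option V, IsPairing G p → 2 * k ≤ n + (expo p).card := by
      intro p hp
      have h1 := pairing_colorable hp
      have h2 := expo_card_eq hp
      have h3 : k ≤ (Finset.univ \ Bset p).card := by
        by_contra hlt
        push_neg at hlt
        exact hnotcol (h1.mono (by omega))
      have h4 : (Finset.univ \ Bset p).card + (Bset p).card = n := by
        rw [Finset.card_sdiff_add_card_eq_card (Finset.subset_univ _), Finset.card_univ]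
      omega
    -- for every vertex there is a maximum pairing avoiding it
    have Avoid : ∀ w : V, ∃ p, IsPairing G p ∧ p w = none ∧ n + (expo p).card ≤ 2 * k := by
      intro w
      have hcol : (G.induce {u | u ≠ w}).Colorable (k - 1) := by
        rw [← chromaticNumber_le_iff_colorable, hcrit w]
      obtain ⟨p, hp, hpw, hcount⟩ := exists_avoiding hα w hcol
      have h2 := expo_card_eq hp
      exact ⟨p, hp, hpw, by omega⟩
    -- minimal distance between two exposed vertices of a maximum pairing
    have hPex : ∃ d : ℕ, ∃ (p : V → Option V) (a b : V), IsPairing G p ∧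
        n + (expo p).card ≤ 2 * k ∧ p a = none ∧ p b = none ∧ a ≠ b ∧
        Gᶜ.dist a b = d := by
      have hne : Nonempty V := Fintype.card_pos_iff.mp (by omega)
      obtain ⟨w0⟩ := hne
      obtain ⟨p, hp, hpw, hcount⟩ := Avoid w0
      have hE : 2 ≤ (expo p).card := by
        have := C1e p hp
        omega
      obtain ⟨a, ha, b, hb, hab⟩ := Finset.one_lt_card.mp (show 1 < (expo p).card by omega)
      exact ⟨Gᶜ.dist a b, p, a, b, hp, hcount, mem_expo.mp ha, mem_expo.mp hb, hab, rfl⟩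
    set d0 := Nat.find hPex with hd0
    obtain ⟨Mp, u, v, hM, hMcount, hMu, hMv, huv, hdist⟩ := Nat.find_spec hPex
    have hMeq : n + (expo Mp).card = 2 * k := le_antisymm hMcount (by
      have := C1e Mp hM; omega)
    have hreach : Gᶜ.Reachable u v := hanti.preconnected u v
    obtain ⟨W, hW⟩ := hreach.exists_walk_length_eq_dist
    rw [hdist] at hW
    cases W with
    | nil => exact huv rfl
    | @cons _ w' _ h q =>
      rw [SimpleGraph.Walk.length_cons] at hW
      have hcompl : ∀ a b : V, Gᶜ.Adj a b → a ≠ b ∧ ¬ G.Adj a b := by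
        intro a b hab
        rwa [SimpleGraph.compl_adj] at hab
      by_cases hwv : w' = v
      · -- u,v adjacent in the complement: augment
        subst hwv
        obtain ⟨hne', hnadj⟩ := hcompl u w' h
        obtain ⟨q', hq', hqcard⟩ := augment hM hne' hnadj hMu hMv
        have := C1e q' hq'
        omega
      · have hq1 : 1 ≤ q.length := by
          rcases Nat.eq_zero_or_pos q.length with h0 | h1
          · exact absurd (SimpleGraph.Walk.eq_of_length_eq_zero h0) hwv
          · omega
        have hd2 : 2 ≤ d0 := by omega
        have hduw : Gᶜ.dist u w' ≤ 1 := by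
          have := SimpleGraph.dist_le (SimpleGraph.Walk.cons h SimpleGraph.Walk.nil)
          simpa using this
        have hdwv : Gᶜ.dist w' v ≤ q.length := SimpleGraph.dist_le q
        obtain ⟨N, hN, hNw, hNcount⟩ := Avoid w'
        have hNeq : n + (expo N).card = 2 * k := le_antisymm hNcount (by
          have := C1e N hN; omega)
        have huw : u ≠ w' := (hcompl u w' h).1
        by_cases hNun : N u = none
        · -- (N, u, w') is a closer exposed pair
          have hP : ∃ (p : V → Option V) (a b : V), IsPairing G p ∧
              n + (expo p).card ≤ 2 * k ∧ p a = none ∧ p b = none ∧ a ≠ b ∧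
              Gᶜ.dist a b = Gᶜ.dist u w' :=
            ⟨N, u, w', hN, hNcount, hNun, hNw, huw, rfl⟩
          have := Nat.find_min' hPex hP
          omega
        by_cases hNvn : N v = none
        · have hP : ∃ (p : V → Option V) (a b : V), IsPairing G p ∧
              n + (expo p).card ≤ 2 * k ∧ p a = none ∧ p b = none ∧ a ≠ b ∧
              Gᶜ.dist a b = Gᶜ.dist w' v :=
            ⟨N, w', v, hN, hNcount, hNw, hNvn, hwv, rfl⟩
          have := Nat.find_min' hPex hP
          omega
        · -- run the alternating walk argument
          obtain ⟨S, hSM, hSN, huS, z, hzS, hzu, hcase⟩ :=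
            walk_struct hM hN hMu hNun
          obtain ⟨hflipMN, hexpoMN⟩ := flip hM hN hSM hSN
          obtain ⟨hflipNM, hexpoNM⟩ := flip hN hM hSN hSM
          have hdisj1 : Disjoint (expo Mp \ S) (expo N ∩ S) := by
            rw [Finset.disjoint_left]
            intro x hx hx'
            exact (Finset.mem_sdiff.mp hx).2 (Finset.mem_inter.mp hx').2
          have hdisj2 : Disjoint (expo N \ S) (expo Mp ∩ S) := by
            rw [Finset.disjoint_left]
            intro x hx hx'
            exact (Finset.mem_sdiff.mp hx).2 (Finset.mem_inter.mp hx').2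
          have hsd1 := Finset.card_sdiff_add_card_inter (expo Mp) S
          have hsd2 := Finset.card_sdiff_add_card_inter (expo N) S
          have hcard1 : (expo fun x => if x ∈ S then N x else Mp x).card
              + (expo Mp ∩ S).card = (expo Mp).card + (expo N ∩ S).card := by
            rw [hexpoMN, Finset.card_union_of_disjoint hdisj1]
            omega
          have hcard2 : (expo fun x => if x ∈ S then Mp x else N x).card
              + (expo N ∩ S).card = (expo N).card + (expo Mp ∩ S).card := by
            rw [hexpoNM, Finset.card_union_of_disjoint hdisj2]
            omega
          rcases hcase with ⟨hMS2, hNS0⟩ | ⟨hMS1, hNS1, hNz⟩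
          · -- augmenting case: the flip strictly increases the pairing
            have hc2 : (expo Mp ∩ S).card = 2 := by
              rw [hMS2]
              rw [Finset.card_insert_of_notMem (by simpa using hzu.symm),
                Finset.card_singleton]
            have hc0 : (expo N ∩ S).card = 0 := by rw [hNS0]; rfl
            have := C1e _ hflipMN
            omega
          · have hc1 : (expo Mp ∩ S).card = 1 := by rw [hMS1]; rfl
            have hc1' : (expo N ∩ S).card = 1 := by rw [hNS1]; rfl
            by_cases hwS : w' ∈ S
            · -- w' = z; flip Mp, exposing w' and v
              have hwz : w' = z := by
                have : w' ∈ expo N ∩ S :=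
                  Finset.mem_inter.mpr ⟨mem_expo.mpr hNw, hwS⟩
                rw [hNS1] at this
                exact Finset.mem_singleton.mp this
              have hvS : v ∉ S := by
                intro hv
                have : v ∈ expo Mp ∩ S :=
                  Finset.mem_inter.mpr ⟨mem_expo.mpr hMv, hv⟩
                rw [hMS1] at this
                exact huv (Finset.mem_singleton.mp this).symm
              have hMpv : (fun x => if x ∈ S then N x else Mp x) v = none := by
                have : v ∈ expo fun x => if x ∈ S then N x else Mp x := by
                  rw [hexpoMN]
                  exact Finset.mem_union_left _
                    (Finset.mem_sdiff.mpr ⟨mem_expo.mpr hMv, hvS⟩)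
                exact mem_expo.mp this
              have hMpw : (fun x => if x ∈ S then N x else Mp x) w' = none := by
                have : w' ∈ expo fun x => if x ∈ S then N x else Mp x := by
                  rw [hexpoMN]
                  exact Finset.mem_union_right _
                    (Finset.mem_inter.mpr ⟨mem_expo.mpr hNw, hwS⟩)
                exact mem_expo.mp this
              have hP : ∃ (p : V → Option V) (a b : V), IsPairing G p ∧
                  n + (expo p).card ≤ 2 * k ∧ p a = none ∧ p b = none ∧ a ≠ b ∧
                  Gᶜ.dist a b = Gᶜ.dist w' v :=
                ⟨fun x => if x ∈ S then N x else Mp x, w', v, hflipMN,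
                  by omega, hMpw, hMpv, hwv, rfl⟩
              have := Nat.find_min' hPex hP
              omega
            · -- flip N, exposing u and w'
              have hNu' : (fun x => if x ∈ S then Mp x else N x) u = none := by
                have : u ∈ expo fun x => if x ∈ S then Mp x else N x := by
                  rw [hexpoNM]
                  exact Finset.mem_union_right _
                    (Finset.mem_inter.mpr ⟨mem_expo.mpr hMu, huS⟩)
                exact mem_expo.mp this
              have hNw' : (fun x => if x ∈ S then Mp x else N x) w' = none := by
                have : w' ∈ expo fun x => if x ∈ S then Mp x else N x := by
                  rw [hexpoNM]
                  exact Finset.mem_union_left _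
                    (Finset.mem_sdiff.mpr ⟨mem_expo.mpr hNw, hwS⟩)
                exact mem_expo.mp this
              have hP : ∃ (p : V → Option V) (a b : V), IsPairing G p ∧
                  n + (expo p).card ≤ 2 * k ∧ p a = none ∧ p b = none ∧ a ≠ b ∧
                  Gᶜ.dist a b = Gᶜ.dist u w' :=
                ⟨fun x => if x ∈ S then Mp x else N x, u, w', hflipNM,
                  by omega, hNu', hNw', huw, rfl⟩
              have := Nat.find_min' hPex hP
              omega
end

section
/- Let G be a graph with independence number at most 2 containing a clique K and a collection 𝒫 of pairwise vertex-disjoint induced 3-vertex paths in G − V(K). Then G contains an odd model of the complete graph on |V(K)| + |𝒫| vertices, where each vertex of K and each path of 𝒫 is a branch set. -/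
open SimpleGraph

lemma indep_helper {V : Type*} [DecidableEq V] {G : SimpleGraph V} (hα : IndepLEtwo G)
    {x a c : V} (hxa : x ≠ a) (hxc : x ≠ c) (hac : a ≠ c) (hnac : ¬ G.Adj a c) :
    G.Adj x a ∨ G.Adj x c := by
  by_contra h
  push_neg at h
  have hcard : ({x, a, c} : Finset V).card = 3 := by
    rw [Finset.card_insert_of_notMem (by simp [hxa, hxc]),
      Finset.card_insert_of_notMem (by simp [hac]), Finset.card_singleton]
  have := hα {x, a, c} ?_
  · omega
  · intro u hu w hw hne
    simp only [Finset.mem_insert, Finset.mem_singleton] at hu hw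
    rcases hu with rfl | rfl | rfl <;> rcases hw with rfl | rfl | rfl <;>
      first
      | exact absurd rfl hne
      | exact h.1
      | exact h.2
      | exact hnac
      | exact fun hh => h.1 hh.symm
      | exact fun hh => h.2 hh.symm
      | exact fun hh => hnac hh.symm

lemma conn_singleton {V : Type*} (G' : SimpleGraph V) (s : Set V)
    (hne : s.Nonempty) (hs : s.Subsingleton) : (G'.induce s).Connected := by
  rw [SimpleGraph.connected_iff]
  refine ⟨fun u w => ?_, ⟨⟨hne.choose, hne.choose_spec⟩⟩⟩
  have : u = w := Subtype.ext (hs u.2 w.2)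
  rw [this]

lemma conn3 {V : Type*} {G' : SimpleGraph V} {a b c : V} (hab : G'.Adj a b) (hbc : G'.Adj b c) :
    (G'.induce ({a, b, c} : Set V)).Connected := by
  rw [SimpleGraph.connected_iff]
  have hbm : b ∈ ({a, b, c} : Set V) := by simp
  have key : ∀ w : ({a, b, c} : Set V), (G'.induce ({a, b, c} : Set V)).Reachable w ⟨b, hbm⟩ := by
    rintro ⟨w, hw⟩
    rcases hw with rfl | rfl | rfl
    · exact SimpleGraph.Adj.reachable (show G'.Adj w b from hab)
    · rfl
    · exact SimpleGraph.Adj.reachable (show G'.Adj w b from hbc.symm)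
  exact ⟨fun u v => (key u).trans (key v).symm, ⟨⟨b, hbm⟩⟩⟩

/-- Given a clique `K` and a family `Ps` of pairwise disjoint induced `P₃`'s
avoiding `K` in a graph with `α(G) ≤ 2`, `G` contains an odd model of the
complete graph on `|K| + |Ps|` vertices whose branch sets are exactly the
vertices of `K` and the paths of `Ps`. -/
theorem stmt15 {V : Type*} [Fintype V] [DecidableEq V] (G : SimpleGraph V)
    (hα : IndepLEtwo G) (K : Finset V) (hK : G.IsClique ↑K)
    (Ps : Finset (Finset V))
    (hP : ∀ P ∈ Ps, IsInducedP3 G P ∧ Disjoint P K)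
    (hdisj : (↑Ps : Set (Finset V)).Pairwise (fun P Q => Disjoint P Q)) :
    ∃ (B : Fin (K.card + Ps.card) → Finset V) (c : V → Bool),
      IsOddModel G (⊤ : SimpleGraph (Fin (K.card + Ps.card))) B c ∧
      (∀ i, B i ∈ Ps ∨ ∃ v ∈ K, B i = {v}) ∧
      (∀ P ∈ Ps, ∃ i, B i = P) ∧
      (∀ v ∈ K, ∃ i, B i = {v}) := by
  classical
  choose pa pb pc hab' hbc' hac' hPeq hadjab hadjbc hnadj using fun P hp => (hP P hp).1
  set col : V → Bool :=
    fun v => if ∃ Q, ∃ hq : Q ∈ Ps, pb Q hq = v then true else false with hcol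
  have mema : ∀ P (hp : P ∈ Ps), pa P hp ∈ P := fun P hp => by
    have h : pa P hp ∈ ({pa P hp, pb P hp, pc P hp} : Finset V) := by simp
    rwa [← hPeq P hp] at h
  have memb : ∀ P (hp : P ∈ Ps), pb P hp ∈ P := fun P hp => by
    have h : pb P hp ∈ ({pa P hp, pb P hp, pc P hp} : Finset V) := by simp
    rwa [← hPeq P hp] at h
  have memc : ∀ P (hp : P ∈ Ps), pc P hp ∈ P := fun P hp => by
    have h : pc P hp ∈ ({pa P hp, pb P hp, pc P hp} : Finset V) := by simp
    rwa [← hPeq P hp] at h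
  have colK : ∀ v ∈ K, col v = false := by
    intro v hv
    simp only [hcol]
    rw [if_neg]
    rintro ⟨Q, hq, rfl⟩
    exact Finset.disjoint_left.mp (hP Q hq).2 (memb Q hq) hv
  have colb : ∀ P (hp : P ∈ Ps), col (pb P hp) = true := by
    intro P hp; simp only [hcol]; rw [if_pos ⟨P, hp, rfl⟩]
  have notcenter : ∀ P (hp : P ∈ Ps) (v : V), v ∈ P → v ≠ pb P hp → col v = false := by
    intro P hp v hvP hvb
    simp only [hcol]
    rw [if_neg]
    rintro ⟨Q, hq, rfl⟩
    by_cases hPQ : Q = P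
    · subst hPQ
      exact hvb rfl
    · exact Finset.disjoint_left.mp (hdisj hq hp hPQ) (memb Q hq) hvP
  have cola : ∀ P (hp : P ∈ Ps), col (pa P hp) = false :=
    fun P hp => notcenter P hp _ (mema P hp) (fun h => (hab' P hp) h)
  have colc : ∀ P (hp : P ∈ Ps), col (pc P hp) = false :=
    fun P hp => notcenter P hp _ (memc P hp) (fun h => (hbc' P hp) h.symm)
  have key : ∀ P (hp : P ∈ Ps) (v : V), v ∉ P → G.Adj v (pa P hp) ∨ G.Adj v (pc P hp) := by
    intro P hp v hv
    exact indep_helper hα (fun h => hv (h ▸ mema P hp)) (fun h => hv (h ▸ memc P hp))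
      (hac' P hp) (hnadj P hp)
  let kv : Fin K.card → V := fun j => (K.equivFin.symm j : V)
  have kvK : ∀ j, kv j ∈ K := fun j => (K.equivFin.symm j).2
  have kvinj : Function.Injective kv := fun j j' h =>
    K.equivFin.symm.injective (Subtype.ext h)
  let pv : Fin Ps.card → Finset V := fun j => (Ps.equivFin.symm j : Finset V)
  have pvPs : ∀ j, pv j ∈ Ps := fun j => (Ps.equivFin.symm j).2
  have pvinj : Function.Injective pv := fun j j' h =>
    Ps.equivFin.symm.injective (Subtype.ext h)
  let B : Fin (K.card + Ps.card) → Finset V :=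
    fun i => Sum.elim (fun j => {kv j}) pv (finSumFinEquiv.symm i)
  have hBd : ∀ i, B i = Sum.elim (fun j => {kv j}) pv (finSumFinEquiv.symm i) := fun _ => rfl
  -- disjointness of a K-singleton from a path
  have disjKP : ∀ j j', Disjoint ({kv j} : Finset V) (pv j') := by
    intro j j'
    rw [Finset.disjoint_singleton_left]
    exact fun h => Finset.disjoint_left.mp (hP _ (pvPs j')).2 h (kvK j)
  refine ⟨B, col, ⟨?_, ?_, ?_, ?_⟩, ?_, ?_, ?_⟩
  · -- nonempty
    intro i
    rw [hBd]
    rcases finSumFinEquiv.symm i with j | j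
    · exact ⟨kv j, by simp⟩
    · exact ⟨pa _ (pvPs j), mema _ (pvPs j)⟩
  · -- disjoint
    intro i i' hne
    have hne' : finSumFinEquiv.symm i ≠ finSumFinEquiv.symm i' :=
      fun h => hne (finSumFinEquiv.symm.injective h)
    rw [hBd, hBd]
    rcases h1 : finSumFinEquiv.symm i with j | j <;> rcases h2 : finSumFinEquiv.symm i' with j' | j'
    · simp only [Sum.elim_inl]
      rw [Finset.disjoint_singleton_left, Finset.mem_singleton]
      intro h
      exact hne' (h1.trans ((congrArg Sum.inl (kvinj h)).trans h2.symm))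
    · exact disjKP j j'
    · exact (disjKP j' j).symm
    · simp only [Sum.elim_inr]
      refine hdisj (pvPs j) (pvPs j') (fun h => ?_)
      exact hne' (h1.trans ((congrArg Sum.inr (pvinj h)).trans h2.symm))
  · -- connectedness
    intro i
    rw [hBd]
    rcases finSumFinEquiv.symm i with j | j
    · exact conn_singleton _ _ ⟨kv j, by simp⟩ (by intro x hx y hy; simp only [Sum.elim_inl,
        Finset.coe_singleton, Set.mem_singleton_iff] at hx hy; rw [hx, hy])
    · show ((bichromSub G col).induce (↑(pv j) : Set V)).Connected
      have hp := pvPs j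
      rw [hPeq (pv j) hp, Finset.coe_insert, Finset.coe_insert, Finset.coe_singleton]
      refine conn3 (a := pa _ hp) (b := pb _ hp) (c := pc _ hp) ?_ ?_
      · exact ⟨hadjab _ hp, by rw [cola _ hp, colb _ hp]; simp⟩
      · exact ⟨hadjbc _ hp, by rw [colb _ hp, colc _ hp]; simp⟩
  · -- mono
    intro i i' hne
    have hne'' : i ≠ i' := hne.ne
    have hne' : finSumFinEquiv.symm i ≠ finSumFinEquiv.symm i' :=
      fun h => hne'' (finSumFinEquiv.symm.injective h)
    rw [hBd, hBd]
    rcases h1 : finSumFinEquiv.symm i with j | j <;> rcases h2 : finSumFinEquiv.symm i' with j' | j'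
    · have hkk : kv j ≠ kv j' := by
        intro h
        exact hne' (h1.trans ((congrArg Sum.inl (kvinj h)).trans h2.symm))
      exact ⟨kv j, by simp, kv j', by simp,
        hK (kvK j) (kvK j') hkk, by rw [colK _ (kvK j), colK _ (kvK j')]⟩
    · -- K vertex to path
      have hp := pvPs j'
      have hnm : kv j ∉ pv j' := Finset.disjoint_singleton_left.mp (disjKP j j')
      rcases key _ hp _ hnm with h | h
      · exact ⟨kv j, by simp, pa _ hp, mema _ hp, h,
          by rw [colK _ (kvK j), cola _ hp]⟩
      · exact ⟨kv j, by simp, pc _ hp, memc _ hp, h,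
          by rw [colK _ (kvK j), colc _ hp]⟩
    · -- path to K vertex
      have hp := pvPs j
      have hnm : kv j' ∉ pv j := Finset.disjoint_singleton_left.mp (disjKP j' j)
      rcases key _ hp _ hnm with h | h
      · exact ⟨pa _ hp, mema _ hp, kv j', by simp, h.symm,
          by rw [colK _ (kvK j'), cola _ hp]⟩
      · exact ⟨pc _ hp, memc _ hp, kv j', by simp, h.symm,
          by rw [colK _ (kvK j'), colc _ hp]⟩
    · -- path to path
      have hp := pvPs j
      have hq := pvPs j'
      have hPQ : pv j' ≠ pv j := by
        intro h
        exact hne' (h1.trans ((congrArg Sum.inr (pvinj h.symm)).trans h2.symm))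
      have hnm : pa _ hq ∉ pv j :=
        fun h => Finset.disjoint_left.mp (hdisj hq hp hPQ) (mema _ hq) h
      rcases key _ hp _ hnm with h | h
      · exact ⟨pa _ hp, mema _ hp, pa _ hq, mema _ hq, h.symm,
          by rw [cola _ hp, cola _ hq]⟩
      · exact ⟨pc _ hp, memc _ hp, pa _ hq, mema _ hq, h.symm,
          by rw [colc _ hp, cola _ hq]⟩
  · -- each branch set is a path or a K-singleton
    intro i
    rw [hBd]
    rcases finSumFinEquiv.symm i with j | j
    · exact Or.inr ⟨kv j, kvK j, rfl⟩
    · exact Or.inl (pvPs j)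
  · -- surjectivity onto Ps
    intro P hp
    refine ⟨finSumFinEquiv (Sum.inr (Ps.equivFin ⟨P, hp⟩)), ?_⟩
    rw [hBd, Equiv.symm_apply_apply]
    show pv _ = P
    simp only [pv, Equiv.symm_apply_apply]
  · -- surjectivity onto K
    intro v hv
    refine ⟨finSumFinEquiv (Sum.inl (K.equivFin ⟨v, hv⟩)), ?_⟩
    rw [hBd, Equiv.symm_apply_apply]
    show ({kv _} : Finset V) = {v}
    simp only [kv, Equiv.symm_apply_apply]
end
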